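/- Let γ : ℝ → GL(n, ℝ) be a smooth (differentiable) curve of invertible matrices satisfying the second-order ODE γ'' = γ' γ⁻¹ γ'. If γ(0) = γ₀ and γ'(0) = ε₀, then γ(t) = γ₀ · exp(t · γ₀⁻¹ ε₀) for all t. -/

import Mathlib

set_option maxHeartbeats 1000000


open Matrix

section EntryHelpers

variable {n : ℕ}

/-- Entrywise product rule for matrix-valued curves (instance-free statement). -/
theorem entry_hasDerivAt_mul {f g : ℝ → Matrix (Fin n) (Fin n) ℝ}
    {f' g' : Matrix (Fin n) (Fin n) ℝ} {t : ℝ}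
    (hf : ∀ i j, HasDerivAt (fun s => f s i j) (f' i j) t)
    (hg : ∀ i j, HasDerivAt (fun s => g s i j) (g' i j) t) (i j : Fin n) :
    HasDerivAt (fun s => (f s * g s) i j) ((f' * g t + f t * g') i j) t := by
  have h : HasDerivAt (fun s => ∑ k, f s i k * g s k j)
      (∑ k, (f' i k * g t k j + f t i k * g' k j)) t :=
    HasDerivAt.fun_sum fun k _ => (hf i k).fun_mul (hg k j)
  simpa [Matrix.mul_apply, Matrix.add_apply, Finset.sum_add_distrib] using h

end EntryHelpers


section Linfty

attribute [local instance] Matrix.linftyOpNormedRing Matrix.linftyOpNormedAlgebra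

variable {n : ℕ}

theorem hasDerivAt_of_entries' {f : ℝ → Matrix (Fin n) (Fin n) ℝ}
    {a : Matrix (Fin n) (Fin n) ℝ} {t : ℝ}
    (h : ∀ i j, HasDerivAt (fun s => f s i j) (a i j) t) : HasDerivAt f a t := by
  have key : ∀ M : Matrix (Fin n) (Fin n) ℝ,
      M = ∑ i, ∑ j, M i j • Matrix.single i j (1 : ℝ) := by
    intro M
    conv_lhs => rw [matrix_eq_sum_single M]
    refine Finset.sum_congr rfl fun i _ => Finset.sum_congr rfl fun j _ => ?_
    rw [Matrix.smul_single, smul_eq_mul, mul_one]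
  have h1 : HasDerivAt (fun s => ∑ i, ∑ j, f s i j • Matrix.single i j (1 : ℝ))
      (∑ i, ∑ j, a i j • Matrix.single i j (1 : ℝ)) t :=
    HasDerivAt.fun_sum fun i _ => HasDerivAt.fun_sum fun j _ => (h i j).smul_const _
  convert h1 using 1
  · funext s; exact key (f s)
  · exact key a

theorem entries_of_hasDerivAt' {f : ℝ → Matrix (Fin n) (Fin n) ℝ}
    {a : Matrix (Fin n) (Fin n) ℝ} {t : ℝ} (h : HasDerivAt f a t) (i j : Fin n) :
    HasDerivAt (fun s => f s i j) (a i j) t := by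
  let ℓ : Matrix (Fin n) (Fin n) ℝ →ₗ[ℝ] ℝ :=
    { toFun := fun M => M i j
      map_add' := fun _ _ => rfl
      map_smul' := fun _ _ => rfl }
  exact (LinearMap.toContinuousLinearMap ℓ).hasFDerivAt.comp_hasDerivAt t h

theorem exp_entries_hasDerivAt (A : Matrix (Fin n) (Fin n) ℝ) (t : ℝ) (i j : Fin n) :
    HasDerivAt (fun s : ℝ => NormedSpace.exp (s • A) i j)
      ((NormedSpace.exp (t • A) * A) i j) t :=
  entries_of_hasDerivAt' (hasDerivAt_exp_smul_const A t) i j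

theorem expNeg_mul_exp (A : Matrix (Fin n) (Fin n) ℝ) (t : ℝ) :
    NormedSpace.exp (t • -A) * NormedSpace.exp (t • A) = 1 := by
  have hc : Commute (t • -A) (t • A) :=
    (((Commute.refl A).neg_left).smul_left t).smul_right t
  rw [← Matrix.exp_add_of_commute _ _ hc, smul_neg, neg_add_cancel, NormedSpace.exp_zero]

theorem exp_comm_self (A : Matrix (Fin n) (Fin n) ℝ) (t : ℝ) :
    A * NormedSpace.exp (t • -A) = NormedSpace.exp (t • -A) * A :=
  (((Commute.refl A).neg_right).smul_right t).exp_right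

theorem inv_entries_hasDerivAt {γ : ℝ → Matrix (Fin n) (Fin n) ℝ}
    {d : Matrix (Fin n) (Fin n) ℝ} {t : ℝ}
    (hinv : ∀ s, IsUnit (γ s))
    (hde : ∀ i j, HasDerivAt (fun s => γ s i j) (d i j) t) :
    ∀ i j, HasDerivAt (fun s => (γ s)⁻¹ i j)
      ((-((γ t)⁻¹ * d * (γ t)⁻¹)) i j) t := by
  have hγ : HasDerivAt γ d t := hasDerivAt_of_entries' hde
  obtain ⟨u, hu⟩ := hinv t
  have h2 := hasFDerivAt_ringInverse (𝕜 := ℝ) (R := Matrix (Fin n) (Fin n) ℝ) u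
  rw [hu] at h2
  have h3 := h2.comp_hasDerivAt t hγ
  have hval : (-(ContinuousLinearMap.mulLeftRight ℝ (Matrix (Fin n) (Fin n) ℝ)
      ↑u⁻¹ ↑u⁻¹)) d = -((γ t)⁻¹ * d * (γ t)⁻¹) := by
    have : (↑u⁻¹ : Matrix (Fin n) (Fin n) ℝ) = (γ t)⁻¹ := by
      rw [Matrix.coe_units_inv, hu]
    simp [this]
  rw [hval] at h3
  have hfun : (Ring.inverse ∘ γ) = fun s => (γ s)⁻¹ := by
    funext s; rw [Function.comp_apply, Matrix.nonsing_inv_eq_ringInverse]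
  rw [hfun] at h3
  exact fun i j => entries_of_hasDerivAt' h3 i j

end Linfty

attribute [local instance] Matrix.normedAddCommGroup Matrix.normedSpace

section SupHelpers
variable {n : ℕ}

theorem hasDerivAt_of_entriesS {f : ℝ → Matrix (Fin n) (Fin n) ℝ}
    {a : Matrix (Fin n) (Fin n) ℝ} {t : ℝ}
    (h : ∀ i j, HasDerivAt (fun s => f s i j) (a i j) t) : HasDerivAt f a t := by
  have key : ∀ M : Matrix (Fin n) (Fin n) ℝ,
      M = ∑ i, ∑ j, M i j • Matrix.single i j (1 : ℝ) := by
    intro M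
    conv_lhs => rw [matrix_eq_sum_single M]
    refine Finset.sum_congr rfl fun i _ => Finset.sum_congr rfl fun j _ => ?_
    rw [Matrix.smul_single, smul_eq_mul, mul_one]
  have h1 : HasDerivAt (fun s => ∑ i, ∑ j, f s i j • Matrix.single i j (1 : ℝ))
      (∑ i, ∑ j, a i j • Matrix.single i j (1 : ℝ)) t :=
    HasDerivAt.fun_sum fun i _ => HasDerivAt.fun_sum fun j _ => (h i j).smul_const _
  convert h1 using 1
  · funext s; exact key (f s)
  · exact key a

theorem entries_of_hasDerivAtS {f : ℝ → Matrix (Fin n) (Fin n) ℝ}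
    {a : Matrix (Fin n) (Fin n) ℝ} {t : ℝ} (h : HasDerivAt f a t) (i j : Fin n) :
    HasDerivAt (fun s => f s i j) (a i j) t := by
  let ℓ : Matrix (Fin n) (Fin n) ℝ →ₗ[ℝ] ℝ :=
    { toFun := fun M => M i j
      map_add' := fun _ _ => rfl
      map_smul' := fun _ _ => rfl }
  exact (LinearMap.toContinuousLinearMap ℓ).hasFDerivAt.comp_hasDerivAt t h

end SupHelpers

/-- A smooth curve of invertible matrices solving the geodesic ODE
`γ'' = γ' γ⁻¹ γ'` with initial data `γ(0) = γ₀`, `γ'(0) = ε₀` is given by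
`γ(t) = γ₀ · exp (t • γ₀⁻¹ ε₀)`. -/
theorem geodesic_ode_solution (n : ℕ)
    (γ γ' γ'' : ℝ → Matrix (Fin n) (Fin n) ℝ)
    (γ₀ ε₀ : Matrix (Fin n) (Fin n) ℝ)
    (hinv : ∀ t, IsUnit (γ t))
    (hd : ∀ t, HasDerivAt γ (γ' t) t)
    (hdd : ∀ t, HasDerivAt γ' (γ'' t) t)
    (hode : ∀ t, γ'' t = γ' t * (γ t)⁻¹ * γ' t)
    (h0 : γ 0 = γ₀) (h0' : γ' 0 = ε₀) :
    ∀ t, γ t = γ₀ * NormedSpace.exp (t • (γ₀⁻¹ * ε₀)) := by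
  set A : Matrix (Fin n) (Fin n) ℝ := γ₀⁻¹ * ε₀ with hA
  -- entrywise derivatives of γ and γ'
  have hde : ∀ t i j, HasDerivAt (fun s => γ s i j) (γ' t i j) t :=
    fun t => entries_of_hasDerivAtS (hd t)
  have hdde : ∀ t i j, HasDerivAt (fun s => γ' s i j) (γ'' t i j) t :=
    fun t => entries_of_hasDerivAtS (hdd t)
  -- entrywise derivative of the inverse
  have hinvd : ∀ t i j, HasDerivAt (fun s => (γ s)⁻¹ i j)
      ((-((γ t)⁻¹ * γ' t * (γ t)⁻¹)) i j) t :=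
    fun t => inv_entries_hasDerivAt hinv (hde t)
  -- γ⁻¹ * γ' is constant
  have hGd : ∀ t i j, HasDerivAt (fun s => ((γ s)⁻¹ * γ' s) i j) 0 t := by
    intro t i j
    have h := entry_hasDerivAt_mul (hinvd t) (hdde t) i j
    have hz : (-((γ t)⁻¹ * γ' t * (γ t)⁻¹) * γ' t + (γ t)⁻¹ * γ'' t)
        = (0 : Matrix (Fin n) (Fin n) ℝ) := by
      rw [hode t]; noncomm_ring
    rw [hz] at h
    simpa using h
  have hGconst : ∀ t, (γ t)⁻¹ * γ' t = A := by
    intro t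
    have : ∀ i j, ((γ t)⁻¹ * γ' t) i j = ((γ 0)⁻¹ * γ' 0) i j := by
      intro i j
      exact is_const_of_deriv_eq_zero
        (fun x => ((hGd x i j)).differentiableAt)
        (fun x => (hGd x i j).deriv) t 0
    have hmat : (γ t)⁻¹ * γ' t = (γ 0)⁻¹ * γ' 0 := by
      ext i j; exact this i j
    rw [hmat, h0, h0']
  have hunit : ∀ t, IsUnit (γ t).det := fun t =>
    (Matrix.isUnit_iff_isUnit_det _).mp (hinv t)
  have hγ' : ∀ t, γ' t = γ t * A := by
    intro t
    have := congrArg (fun M => γ t * M) (hGconst t)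
    simpa [← Matrix.mul_assoc, Matrix.mul_nonsing_inv _ (hunit t)] using this
  -- define B s = exp (s • -A)
  set B : ℝ → Matrix (Fin n) (Fin n) ℝ := fun s => NormedSpace.exp (s • -A) with hB
  have hBd : ∀ t i j, HasDerivAt (fun s => B s i j) ((B t * -A) i j) t :=
    fun t => exp_entries_hasDerivAt (-A) t
  -- γ * B is constant
  have hHd : ∀ t i j, HasDerivAt (fun s => (γ s * B s) i j) 0 t := by
    intro t i j
    have h := entry_hasDerivAt_mul (hde t) (hBd t) i j
    have hz : (γ' t * B t + γ t * (B t * -A)) = (0 : Matrix (Fin n) (Fin n) ℝ) := by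
      rw [hγ' t]
      have hc : A * B t = B t * A := exp_comm_self A t
      calc γ t * A * B t + γ t * (B t * -A)
          = γ t * (A * B t) + -(γ t * (B t * A)) := by
            rw [Matrix.mul_assoc]; rw [mul_neg, mul_neg]
        _ = γ t * (B t * A) + -(γ t * (B t * A)) := by rw [hc]
        _ = 0 := add_neg_cancel _
    rw [hz] at h
    simpa using h
  have hHconst : ∀ t, γ t * B t = γ₀ := by
    intro t
    have : ∀ i j, (γ t * B t) i j = (γ 0 * B 0) i j := by
      intro i j
      exact is_const_of_deriv_eq_zero
        (fun x => ((hHd x i j)).differentiableAt)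
        (fun x => (hHd x i j).deriv) t 0
    have hmat : γ t * B t = γ 0 * B 0 := by ext i j; exact this i j
    have hB0 : B 0 = 1 := by
      rw [hB]; simp only [zero_smul]; exact NormedSpace.exp_zero
    rw [hmat, hB0, h0, Matrix.mul_one]
  intro t
  have hBE : B t * NormedSpace.exp (t • A) = 1 := expNeg_mul_exp A t
  calc γ t = γ t * (B t * NormedSpace.exp (t • A)) := by rw [hBE, Matrix.mul_one]
    _ = (γ t * B t) * NormedSpace.exp (t • A) := by rw [Matrix.mul_assoc]
    _ = γ₀ * NormedSpace.exp (t • A) := by rw [hHconst t]
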